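/- Let n ≥ 2 be even, and suppose c : (ZMod n)² → ZMod n is a proper n-coloring of T_n. Then for each color C, the color class of C is a transversal of the cyclic Latin square: it contains exactly one cell in each row, one in each column, and one of each label. But the cyclic Latin square of even order has no transversal, a contradiction; hence no proper n-coloring of T_n exists for even n. -/
import Mathlib

/-- The cyclic Latin square graph of order `n`. -/
def cyclicLatinSquareGraph (n : ℕ) : SimpleGraph (ZMod n × ZMod n) :=
  SimpleGraph.fromRel (fun x y => x.1 = y.1 ∨ x.2 = y.2 ∨ x.1 + x.2 = y.1 + y.2)

lemma cls_adj {n : ℕ} {p q : ZMod n × ZMod n} (hne : p ≠ q)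
    (h : p.1 = q.1 ∨ p.2 = q.2 ∨ p.1 + p.2 = q.1 + q.2) :
    (cyclicLatinSquareGraph n).Adj p q := ⟨hne, Or.inl h⟩

lemma sum_zmod_ne_zero (n : ℕ) (hn : 2 ≤ n) (heven : Even n) [NeZero n] :
    (∑ x : ZMod n, x) ≠ 0 := by
  obtain ⟨k, hk⟩ := heven
  have hk' : n = 2 * k := by omega
  have h0 : (∑ x : ZMod n, x) = ∑ i ∈ Finset.range n, (i : ZMod n) := by
    refine Finset.sum_bij' (fun x _ => x.val) (fun a _ => (a : ZMod n)) ?_ ?_ ?_ ?_ ?_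
    · intro x _; exact Finset.mem_range.mpr (ZMod.val_lt x)
    · intro a _; exact Finset.mem_univ _
    · intro x _; exact ZMod.natCast_zmod_val x
    · intro a ha; exact ZMod.val_cast_of_lt (Finset.mem_range.mp ha)
    · intro x _; exact (ZMod.natCast_zmod_val x).symm
  have hgauss : (∑ i ∈ Finset.range n, i) = k * (n - 1) := by
    have h := Finset.sum_range_id_mul_two n
    have h2 : n * (n - 1) = (k * (n - 1)) * 2 := by rw [hk']; ring
    omega
  have h1 : (∑ i ∈ Finset.range n, (i : ZMod n)) = ((k * (n - 1) : ℕ) : ZMod n) := by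
    rw [← Nat.cast_sum, hgauss]
  have h2 : ((k * (n - 1) : ℕ) : ZMod n) = (k : ZMod n) := by
    have hn1 : (n - 1 : ℕ) + 1 = n := by omega
    push_cast
    have : ((n - 1 : ℕ) : ZMod n) = -1 := by
      have : (((n - 1 : ℕ) + 1 : ℕ) : ZMod n) = 0 := by rw [hn1]; exact ZMod.natCast_self n
      push_cast at this
      linear_combination this
    rw [this]
    have h2k : ((2 * k : ℕ) : ZMod n) = 0 := by rw [← hk']; exact ZMod.natCast_self n
    push_cast at h2k
    linear_combination -h2k
  rw [h0, h1, h2]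
  intro h
  rw [ZMod.natCast_eq_zero_iff] at h
  have := Nat.le_of_dvd (by omega) h
  omega

theorem even_no_n_coloring_via_transversal (n : ℕ) (hn : 2 ≤ n) (heven : Even n)
    (c : ZMod n × ZMod n → Fin n)
    (hc : ∀ p q : ZMod n × ZMod n, (cyclicLatinSquareGraph n).Adj p q → c p ≠ c q) :
    (∀ C : Fin n,
      (∀ i : ZMod n, ∃! j : ZMod n, c (i, j) = C) ∧
      (∀ j : ZMod n, ∃! i : ZMod n, c (i, j) = C) ∧
      (∀ L : ZMod n, ∃! p : ZMod n × ZMod n, c p = C ∧ p.1 + p.2 = L)) ∧ False := by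
  haveI : NeZero n := ⟨by omega⟩
  have hcard : Fintype.card (ZMod n) = Fintype.card (Fin n) := by
    simp [ZMod.card]
  -- row bijectivity
  have hrow : ∀ i : ZMod n, Function.Bijective (fun j => c (i, j)) := by
    intro i
    rw [Fintype.bijective_iff_injective_and_card]
    refine ⟨fun j j' h => ?_, hcard⟩
    by_contra hne
    exact hc (i, j) (i, j') (cls_adj (by simp [hne]) (Or.inl rfl)) h
  have hcol : ∀ j : ZMod n, Function.Bijective (fun i => c (i, j)) := by
    intro j
    rw [Fintype.bijective_iff_injective_and_card]
    refine ⟨fun i i' h => ?_, hcard⟩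
    by_contra hne
    exact hc (i, j) (i', j) (cls_adj (by simp [hne]) (Or.inr (Or.inl rfl))) h
  have hlab : ∀ L : ZMod n, Function.Bijective (fun i => c (i, L - i)) := by
    intro L
    rw [Fintype.bijective_iff_injective_and_card]
    refine ⟨fun i i' h => ?_, hcard⟩
    by_contra hne
    refine hc (i, L - i) (i', L - i') (cls_adj (by simp [hne]) (Or.inr (Or.inr ?_))) h
    ring
  have main : ∀ C : Fin n,
      (∀ i : ZMod n, ∃! j : ZMod n, c (i, j) = C) ∧
      (∀ j : ZMod n, ∃! i : ZMod n, c (i, j) = C) ∧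
      (∀ L : ZMod n, ∃! p : ZMod n × ZMod n, c p = C ∧ p.1 + p.2 = L) := by
    intro C
    refine ⟨fun i => ?_, fun j => ?_, fun L => ?_⟩
    · obtain ⟨j, hj⟩ := (hrow i).2 C
      exact ⟨j, hj, fun j' hj' => (hrow i).1 (hj'.trans hj.symm)⟩
    · obtain ⟨i, hi⟩ := (hcol j).2 C
      exact ⟨i, hi, fun i' hi' => (hcol j).1 (hi'.trans hi.symm)⟩
    · obtain ⟨i, hi⟩ := (hlab L).2 C
      refine ⟨(i, L - i), ⟨hi, by ring⟩, ?_⟩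
      rintro ⟨a, b⟩ ⟨hab, hsum⟩
      have hb : b = L - a := by simp at hsum; linear_combination hsum
      subst hb
      have : a = i := (hlab L).1 (hab.trans hi.symm)
      subst this; rfl
  refine ⟨main, ?_⟩
  -- now derive False
  set C : Fin n := ⟨0, by omega⟩ with hC
  obtain ⟨h1, h2, h3⟩ := main C
  classical
  let f : ZMod n → ZMod n := fun i => (h1 i).choose
  have hf : ∀ i, c (i, f i) = C := fun i => (h1 i).choose_spec.1
  have hfinj : Function.Injective f := by
    intro i i' h
    by_contra hne
    exact hc (i, f i) (i', f i') (cls_adj (by simp [hne]) (Or.inr (Or.inl h)))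
      ((hf i).trans (hf i').symm)
  have hginj : Function.Injective (fun i => i + f i) := by
    intro i i' h
    by_contra hne
    exact hc (i, f i) (i', f i') (cls_adj (by simp [hne]) (Or.inr (Or.inr h)))
      ((hf i).trans (hf i').symm)
  have hfbij : Function.Bijective f := (Finite.injective_iff_bijective).mp hfinj
  have hgbij : Function.Bijective (fun i => i + f i) :=
    (Finite.injective_iff_bijective).mp hginj
  have e1 : ∑ i : ZMod n, (i + f i) = ∑ x : ZMod n, x := hgbij.sum_comp id
  have e2 : ∑ i : ZMod n, f i = ∑ x : ZMod n, x := hfbij.sum_comp id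
  rw [Finset.sum_add_distrib, e2] at e1
  have : (∑ x : ZMod n, x) = 0 := by linear_combination e1
  exact sum_zmod_ne_zero n hn heven this
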